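/- arXiv:1305.1749 — 5 statements merged into one kernel-verified Lean document; each statement's English description precedes it below -/
import Mathlib

section
/- Let U = !![l₁,l₂;r₁,r₂] be a 2×2 complex unitary matrix, L = !![l₁,l₂;0,0], R = !![0,0;r₁,r₂]. Then the map W on ℓ²(ℤ, ℂ²) defined by (Wψ)(x) = L·ψ(x+1) + R·ψ(x−1) is a well-defined unitary operator: it is a surjective linear isometry of ℓ²(ℤ, ℂ²) onto itself. -/
open Matrix Complex
open scoped ENNReal NNReal

noncomputable section

private lemma euclid_normsq (w : EuclideanSpace ℂ (Fin 2)) :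
    ‖w‖ ^ 2 = ‖w 0‖ ^ 2 + ‖w 1‖ ^ 2 := by
  rw [EuclideanSpace.norm_eq, Real.sq_sqrt (by positivity)]
  simp [Fin.sum_univ_two]

private lemma mulVec_normsq (U : Matrix (Fin 2) (Fin 2) ℂ) (hU : star U * U = 1)
    (v : Fin 2 → ℂ) :
    ‖(U *ᵥ v) 0‖ ^ 2 + ‖(U *ᵥ v) 1‖ ^ 2 = ‖v 0‖ ^ 2 + ‖v 1‖ ^ 2 := by
  have key : ∀ w : Fin 2 → ℂ, ((‖w 0‖ ^ 2 + ‖w 1‖ ^ 2 : ℝ) : ℂ) = star w ⬝ᵥ w := by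
    intro w
    simp only [dotProduct, Fin.sum_univ_two, Pi.star_apply, Complex.star_def]
    rw [mul_comm ((starRingEnd ℂ) (w 0)) (w 0), mul_comm ((starRingEnd ℂ) (w 1)) (w 1),
      Complex.mul_conj, Complex.mul_conj]
    push_cast
    simp [Complex.normSq_eq_norm_sq]
  have hdot : star (U *ᵥ v) ⬝ᵥ (U *ᵥ v) = star v ⬝ᵥ v := by
    rw [Matrix.star_mulVec, Matrix.dotProduct_mulVec, Matrix.vecMul_vecMul,
      ← Matrix.star_eq_conjTranspose, hU, Matrix.vecMul_one]
  have := (key (U *ᵥ v)).trans (hdot.trans (key v).symm)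
  exact_mod_cast this

private lemma vec_eta (w : Fin 2 → ℂ) : (![w 0, w 1] : Fin 2 → ℂ) = w := by
  funext i; fin_cases i <;> rfl

/-- The quantum walk one-step map is a unitary (surjective linear isometry) on `ℓ²(ℤ, ℂ²)`. -/
theorem quantum_walk_step_unitary
    (l₁ l₂ r₁ r₂ : ℂ)
    (hU : !![l₁, l₂; r₁, r₂] ∈ Matrix.unitaryGroup (Fin 2) ℂ) :
    ∃ W : (lp (fun _ : ℤ => EuclideanSpace ℂ (Fin 2)) 2) ≃ₗᵢ[ℂ]
          (lp (fun _ : ℤ => EuclideanSpace ℂ (Fin 2)) 2),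
      ∀ (ψ : lp (fun _ : ℤ => EuclideanSpace ℂ (Fin 2)) 2) (x : ℤ) (i : Fin 2),
        (W ψ : ∀ x : ℤ, EuclideanSpace ℂ (Fin 2)) x i =
          Matrix.mulVec !![l₁, l₂; 0, 0] (fun j => (ψ : ∀ x : ℤ, EuclideanSpace ℂ (Fin 2)) (x + 1) j) i
          + Matrix.mulVec !![0, 0; r₁, r₂] (fun j => (ψ : ∀ x : ℤ, EuclideanSpace ℂ (Fin 2)) (x - 1) j) i := by
  set E := EuclideanSpace ℂ (Fin 2) with hE
  set U : Matrix (Fin 2) (Fin 2) ℂ := !![l₁, l₂; r₁, r₂] with hUdef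
  have h1 : star U * U = 1 := hU.1
  have h2 : U * star U = 1 := hU.2
  -- forward and backward maps on raw functions
  set T : (∀ _ : ℤ, E) → (∀ _ : ℤ, E) :=
    fun ψ x => WithLp.toLp 2 ![(U *ᵥ ψ (x + 1)) 0, (U *ᵥ ψ (x - 1)) 1] with hT
  set T' : (∀ _ : ℤ, E) → (∀ _ : ℤ, E) :=
    fun φ x => WithLp.toLp 2 (star U *ᵥ ![φ (x - 1) 0, φ (x + 1) 1]) with hT'
  -- membership characterisation
  have memiff : ∀ f : ∀ _ : ℤ, E, Memℓp f 2 ↔ Summable (fun x => ‖f x‖ ^ 2) := by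
    intro f
    rw [memℓp_gen_iff (p := 2) (by norm_num)]
    have : ∀ x : ℤ, ‖f x‖ ^ (2 : ℝ≥0∞).toReal = ‖f x‖ ^ 2 := by
      intro x
      rw [show ((2 : ℝ≥0∞)).toReal = ((2 : ℕ) : ℝ) by norm_num, Real.rpow_natCast]
    simp_rw [this]
  -- shift invariance of summability / tsum
  have shiftSummable : ∀ (g : ℤ → ℝ) (c : ℤ), Summable g → Summable fun x => g (x + c) :=
    fun g c hg => ((Equiv.addRight c).summable_iff (f := g)).mpr hg
  have shiftTsum : ∀ (g : ℤ → ℝ) (c : ℤ), ∑' x, g (x + c) = ∑' x, g x :=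
    fun g c => (Equiv.addRight c).tsum_eq g
  -- key norm computations
  have memT : ∀ ψ : ∀ _ : ℤ, E, Memℓp ψ 2 →
      (Memℓp (T ψ) 2 ∧ ∑' x, ‖T ψ x‖ ^ 2 = ∑' x, ‖ψ x‖ ^ 2) := by
    intro ψ hψ
    have hψs : Summable fun x => ‖ψ x‖ ^ 2 := (memiff ψ).mp hψ
    set a : ℤ → ℝ := fun x => ‖(U *ᵥ ψ x) 0‖ ^ 2 with ha
    set b : ℤ → ℝ := fun x => ‖(U *ᵥ ψ x) 1‖ ^ 2 with hb
    have hab : ∀ x, a x + b x = ‖ψ x‖ ^ 2 := by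
      intro x
      rw [euclid_normsq (ψ x)]
      exact mulVec_normsq U h1 (ψ x)
    have habs : Summable fun x => a x + b x := by simp_rw [hab]; exact hψs
    have hsa : Summable a :=
      habs.of_nonneg_of_le (fun x => by positivity) (fun x => le_add_of_nonneg_right (by positivity))
    have hsb : Summable b :=
      habs.of_nonneg_of_le (fun x => by positivity) (fun x => le_add_of_nonneg_left (by positivity))
    have hTx : ∀ x, ‖T ψ x‖ ^ 2 = a (x + 1) + b (x + (-1)) := by
      intro x
      rw [euclid_normsq (T ψ x)]
      simp only [hT, Matrix.cons_val_zero, Matrix.cons_val_one, Matrix.head_cons]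
      rw [sub_eq_add_neg]
    have hsum : Summable fun x => ‖T ψ x‖ ^ 2 := by
      simp_rw [hTx]
      exact (shiftSummable a 1 hsa).add (shiftSummable b (-1) hsb)
    refine ⟨(memiff _).mpr hsum, ?_⟩
    calc ∑' x, ‖T ψ x‖ ^ 2 = ∑' x, (a (x + 1) + b (x + (-1))) := by simp_rw [hTx]
      _ = (∑' x, a (x + 1)) + ∑' x, b (x + (-1)) :=
          Summable.tsum_add (shiftSummable a 1 hsa) (shiftSummable b (-1) hsb)
      _ = (∑' x, a x) + ∑' x, b x := by rw [shiftTsum a 1, shiftTsum b (-1)]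
      _ = ∑' x, (a x + b x) := (Summable.tsum_add hsa hsb).symm
      _ = ∑' x, ‖ψ x‖ ^ 2 := by simp_rw [hab]
  have memT' : ∀ φ : ∀ _ : ℤ, E, Memℓp φ 2 → Memℓp (T' φ) 2 := by
    intro φ hφ
    have hφs : Summable fun x => ‖φ x‖ ^ 2 := (memiff φ).mp hφ
    set c : ℤ → ℝ := fun x => ‖φ x 0‖ ^ 2 with hc
    set d : ℤ → ℝ := fun x => ‖φ x 1‖ ^ 2 with hd
    have hcd : ∀ x, c x + d x = ‖φ x‖ ^ 2 := fun x => (euclid_normsq (φ x)).symm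
    have hcds : Summable fun x => c x + d x := by simp_rw [hcd]; exact hφs
    have hsc : Summable c :=
      hcds.of_nonneg_of_le (fun x => by positivity) (fun x => le_add_of_nonneg_right (by positivity))
    have hsd : Summable d :=
      hcds.of_nonneg_of_le (fun x => by positivity) (fun x => le_add_of_nonneg_left (by positivity))
    have h1' : star (star U) * star U = 1 := by rw [star_star]; exact h2
    have hT'x : ∀ x, ‖T' φ x‖ ^ 2 = c (x + (-1)) + d (x + 1) := by
      intro x
      rw [euclid_normsq (T' φ x)]
      have := mulVec_normsq (star U) h1' ![φ (x - 1) 0, φ (x + 1) 1]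
      simp only [hT']
      rw [this]
      simp only [Matrix.cons_val_zero, Matrix.cons_val_one, Matrix.head_cons]
      rw [sub_eq_add_neg]
    apply (memiff _).mpr
    simp_rw [hT'x]
    exact (shiftSummable c (-1) hsc).add (shiftSummable d 1 hsd)
  -- norm formula on lp
  have normlp : ∀ f : lp (fun _ : ℤ => E) 2,
      ‖f‖ = Real.sqrt (∑' x, ‖(f : ∀ _ : ℤ, E) x‖ ^ 2) := by
    intro f
    rw [lp.norm_eq_tsum_rpow (by norm_num : (0 : ℝ) < (2 : ℝ≥0∞).toReal) f]
    have h2 : ((2 : ℝ≥0∞)).toReal = ((2 : ℕ) : ℝ) := by norm_num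
    simp_rw [h2, Real.rpow_natCast]
    rw [Real.sqrt_eq_rpow]
    norm_num
  -- the unitary
  set Wfun : lp (fun _ : ℤ => E) 2 → lp (fun _ : ℤ => E) 2 :=
    fun ψ => ⟨T ψ, (memT ψ (lp.memℓp ψ)).1⟩ with hWfun
  set Winv : lp (fun _ : ℤ => E) 2 → lp (fun _ : ℤ => E) 2 :=
    fun φ => ⟨T' φ, memT' φ (lp.memℓp φ)⟩ with hWinv
  have Eadd : ∀ (v w : E) (i : Fin 2), (v + w) i = v i + w i := fun _ _ _ => rfl
  have Esmul : ∀ (c : ℂ) (v : E) (i : Fin 2), (c • v) i = c * v i := fun _ _ _ => rfl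
  have coeWfun : ∀ ψ, (Wfun ψ : ∀ _ : ℤ, E) = T ψ := fun ψ => rfl
  have coeWinv : ∀ φ, (Winv φ : ∀ _ : ℤ, E) = T' φ := fun φ => rfl
  have hadd : ∀ ψ χ, Wfun (ψ + χ) = Wfun ψ + Wfun χ := by
    intro ψ χ
    apply Subtype.ext
    rw [lp.coeFn_add, coeWfun, coeWfun, coeWfun]
    funext x
    ext i
    simp only [hT, lp.coeFn_add, Pi.add_apply]
    fin_cases i <;>
      · simp [Matrix.mulVec, dotProduct, Fin.sum_univ_two, Eadd]
        ring
  have hsmul : ∀ (c : ℂ) ψ, Wfun (c • ψ) = c • Wfun ψ := by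
    intro c ψ
    apply Subtype.ext
    rw [lp.coeFn_smul, coeWfun, coeWfun]
    funext x
    ext i
    simp only [hT, lp.coeFn_smul, Pi.smul_apply]
    fin_cases i <;>
      · simp [Matrix.mulVec, dotProduct, Fin.sum_univ_two, Esmul]
        ring
  have hleft : ∀ ψ, Winv (Wfun ψ) = ψ := by
    intro ψ
    apply Subtype.ext
    rw [coeWinv, coeWfun]
    funext x
    show T' (T ψ) x = (ψ : ∀ _ : ℤ, E) x
    simp only [hT', hT, Matrix.cons_val_zero, Matrix.cons_val_one, Matrix.head_cons]
    rw [show x - 1 + 1 = x by ring, show x + 1 - 1 = x by ring]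
    rw [vec_eta, Matrix.mulVec_mulVec, h1, Matrix.one_mulVec]
  have hright : ∀ φ, Wfun (Winv φ) = φ := by
    intro φ
    apply Subtype.ext
    rw [coeWfun, coeWinv]
    funext x
    show T (T' φ) x = (φ : ∀ _ : ℤ, E) x
    simp only [hT, hT']
    rw [Matrix.mulVec_mulVec, Matrix.mulVec_mulVec, h2, Matrix.one_mulVec, Matrix.one_mulVec]
    rw [show x + 1 - 1 = x by ring, show x - 1 + 1 = x by ring]
    ext i
    fin_cases i <;> rfl
  have hnorm : ∀ ψ, ‖Wfun ψ‖ = ‖ψ‖ := by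
    intro ψ
    rw [normlp, normlp, coeWfun]
    rw [(memT ψ (lp.memℓp ψ)).2]
  refine ⟨{ toFun := Wfun
            invFun := Winv
            map_add' := hadd
            map_smul' := fun c ψ => hsmul c ψ
            left_inv := hleft
            right_inv := hright
            norm_map' := hnorm }, ?_⟩
  intro ψ x i
  show T ψ x i = _
  simp only [hT]
  fin_cases i <;>
    simp [hUdef, Matrix.mulVec, dotProduct, Fin.sum_univ_two]
end
end

section
/- Let U = !![l₁,l₂;r₁,r₂] be a 2×2 complex unitary matrix with det U = 1, and let θ₁ ∈ ℝ satisfy l₁ = |l₁|e^{iθ₁}. Then for every k ∈ ℝ and every λ ∈ ℂ, det(λ·1 − U(k)) = λ² − 2|l₁|·cos(k−θ₁)·λ + 1, where U(k) := !![e^{−ik}l₁, e^{−ik}l₂; e^{ik}r₁, e^{ik}r₂]. In particular det U(k) = 1 and trace U(k) = 2|l₁|cos(k−θ₁), and the eigenvalues of U(k) are e^{iγ(k−θ₁)} and e^{−iγ(k−θ₁)} where γ(k) := Real.arccos(|l₁|·cos k). -/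
open Matrix Complex

noncomputable section

/-- `γ(k) = arccos(|l₁| cos k)`. -/
def gam (l₁ : ℂ) (k : ℝ) : ℝ := Real.arccos (‖l₁‖ * Real.cos k)

/-- `U(k) = !![e^{−ik}l₁, e^{−ik}l₂; e^{ik}r₁, e^{ik}r₂]`. -/
def Uk (l₁ l₂ r₁ r₂ : ℂ) (k : ℝ) : Matrix (Fin 2) (Fin 2) ℂ :=
  !![Complex.exp (-Complex.I * k) * l₁, Complex.exp (-Complex.I * k) * l₂;
     Complex.exp (Complex.I * k) * r₁, Complex.exp (Complex.I * k) * r₂]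

theorem characteristic_equation_of_Uk
    (l₁ l₂ r₁ r₂ : ℂ)
    (hU : !![l₁, l₂; r₁, r₂] ∈ Matrix.unitaryGroup (Fin 2) ℂ)
    (hdet : (!![l₁, l₂; r₁, r₂] : Matrix (Fin 2) (Fin 2) ℂ).det = 1)
    (θ₁ : ℝ) (hθ₁ : l₁ = (‖l₁‖ : ℂ) * Complex.exp (Complex.I * θ₁))
    (k : ℝ) :
    (∀ l : ℂ, (l • (1 : Matrix (Fin 2) (Fin 2) ℂ) - Uk l₁ l₂ r₁ r₂ k).det =
        l ^ 2 - 2 * ((‖l₁‖ * Real.cos (k - θ₁) : ℝ) : ℂ) * l + 1)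
    ∧ (Uk l₁ l₂ r₁ r₂ k).det = 1
    ∧ (Uk l₁ l₂ r₁ r₂ k).trace = 2 * ((‖l₁‖ * Real.cos (k - θ₁) : ℝ) : ℂ)
    ∧ (Complex.exp (Complex.I * gam l₁ (k - θ₁)) • (1 : Matrix (Fin 2) (Fin 2) ℂ)
        - Uk l₁ l₂ r₁ r₂ k).det = 0
    ∧ (Complex.exp (-Complex.I * gam l₁ (k - θ₁)) • (1 : Matrix (Fin 2) (Fin 2) ℂ)
        - Uk l₁ l₂ r₁ r₂ k).det = 0 := by
  set U : Matrix (Fin 2) (Fin 2) ℂ := !![l₁, l₂; r₁, r₂] with hUdef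
  -- r₂ = conj l₁
  have hinv : star U * U = 1 := Matrix.mem_unitaryGroup_iff'.mp hU
  have hadj : U * U.adjugate = 1 := by
    rw [Matrix.mul_adjugate, hdet, one_smul]
  have hstar : star U = U.adjugate := by
    calc star U = star U * (U * U.adjugate) := by rw [hadj, mul_one]
    _ = (star U * U) * U.adjugate := by rw [mul_assoc]
    _ = U.adjugate := by rw [hinv, one_mul]
  have hr₂ : r₂ = (starRingEnd ℂ) l₁ := by
    have := congrFun (congrFun hstar 0) 0
    simp [hUdef, Matrix.adjugate_fin_two, Matrix.star_apply] at this
    exact this.symm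
  -- |l₁| ≤ 1
  have hmul : U * star U = 1 := Matrix.mem_unitaryGroup_iff.mp hU
  have h00 := congrFun (congrFun hmul 0) 0
  have hnormsq : Complex.normSq l₁ + Complex.normSq l₂ = 1 := by
    have : l₁ * (starRingEnd ℂ) l₁ + l₂ * (starRingEnd ℂ) l₂ = 1 := by
      simpa [hUdef, Matrix.mul_apply, Fin.sum_univ_two, Matrix.star_apply] using h00
    rw [Complex.mul_conj, Complex.mul_conj] at this
    exact_mod_cast this
  have habs1 : ‖l₁‖ ≤ 1 := by
    rw [← Real.sqrt_one]
    rw [Complex.norm_def]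
    apply Real.sqrt_le_sqrt
    nlinarith [Complex.normSq_nonneg l₂]
  -- det of U
  have hdet' : l₁ * r₂ - l₂ * r₁ = 1 := by
    simpa [hUdef, Matrix.det_fin_two] using hdet
  set a : ℝ := ‖l₁‖ * Real.cos (k - θ₁) with ha
  -- trace identity
  have hexp : ∀ x : ℝ, Complex.exp (Complex.I * x) + Complex.exp (-Complex.I * x)
      = 2 * (Real.cos x : ℂ) := by
    intro x
    rw [Complex.ofReal_cos, Complex.cos]
    ring_nf
  have hconj : (starRingEnd ℂ) l₁ = (‖l₁‖ : ℂ) * Complex.exp (-Complex.I * θ₁) := by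
    conv_lhs => rw [hθ₁]
    rw [RingHom.map_mul, Complex.conj_ofReal, ← Complex.exp_conj, RingHom.map_mul,
      Complex.conj_I, Complex.conj_ofReal]
  have htr : Complex.exp (-Complex.I * k) * l₁ + Complex.exp (Complex.I * k) * r₂
      = 2 * (a : ℂ) := by
    rw [hr₂, hconj]
    have e1 : Complex.exp (Complex.I * ((θ₁ - k : ℝ) : ℂ))
        = Complex.exp (Complex.I * θ₁) * Complex.exp (-Complex.I * k) := by
      rw [← Complex.exp_add]; congr 1; push_cast; ring
    have e2 : Complex.exp (-Complex.I * ((θ₁ - k : ℝ) : ℂ))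
        = Complex.exp (-Complex.I * θ₁) * Complex.exp (Complex.I * k) := by
      rw [← Complex.exp_add]; congr 1; push_cast; ring
    have h1 := hexp (θ₁ - k)
    rw [e1, e2] at h1
    have hc : Real.cos (θ₁ - k) = Real.cos (k - θ₁) := by
      rw [Real.cos_sub, Real.cos_sub]; ring
    rw [hc] at h1
    have hl : Complex.exp (-Complex.I * k) * l₁
        = (‖l₁‖ : ℂ) * (Complex.exp (Complex.I * θ₁) * Complex.exp (-Complex.I * k)) := by
      conv_lhs => rw [hθ₁]
      ring
    rw [hl, ha, Complex.ofReal_mul]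
    linear_combination (‖l₁‖ : ℂ) * h1
  -- det of Uk
  have hdetk : (Uk l₁ l₂ r₁ r₂ k).det = 1 := by
    simp only [Uk, Matrix.det_fin_two_of]
    have : Complex.exp (-Complex.I * k) * Complex.exp (Complex.I * k) = 1 := by
      rw [← Complex.exp_add]; ring_nf; exact Complex.exp_zero
    calc Complex.exp (-Complex.I * k) * l₁ * (Complex.exp (Complex.I * k) * r₂)
        - Complex.exp (-Complex.I * k) * l₂ * (Complex.exp (Complex.I * k) * r₁)
        = (Complex.exp (-Complex.I * k) * Complex.exp (Complex.I * k)) * (l₁ * r₂ - l₂ * r₁) := by ring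
      _ = 1 := by rw [this, hdet', mul_one]
  -- characteristic polynomial
  have hchar : ∀ l : ℂ, (l • (1 : Matrix (Fin 2) (Fin 2) ℂ) - Uk l₁ l₂ r₁ r₂ k).det =
      l ^ 2 - 2 * (a : ℂ) * l + 1 := by
    intro l
    have hd : (l • (1 : Matrix (Fin 2) (Fin 2) ℂ) - Uk l₁ l₂ r₁ r₂ k).det
        = (l - Complex.exp (-Complex.I * k) * l₁) * (l - Complex.exp (Complex.I * k) * r₂)
          - (- (Complex.exp (-Complex.I * k) * l₂)) * (- (Complex.exp (Complex.I * k) * r₁)) := by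
      simp [Uk, Matrix.det_fin_two, Matrix.smul_apply, Matrix.one_apply]
    rw [hd]
    have h2 : Complex.exp (-Complex.I * k) * l₁ * (Complex.exp (Complex.I * k) * r₂)
        - Complex.exp (-Complex.I * k) * l₂ * (Complex.exp (Complex.I * k) * r₁) = 1 := by
      have := hdetk
      simpa [Uk, Matrix.det_fin_two_of] using this
    have h3 := htr
    linear_combination h2 - l * h3
  refine ⟨hchar, hdetk, ?_, ?_, ?_⟩
  · simp only [Uk, Matrix.trace_fin_two_of]
    exact htr
  · rw [hchar]
    have hcos : Real.cos (gam l₁ (k - θ₁)) = a := by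
      rw [gam, Real.cos_arccos]
      · nlinarith [Real.neg_one_le_cos (k - θ₁), norm_nonneg l₁, habs1]
      · nlinarith [Real.cos_le_one (k - θ₁), norm_nonneg l₁, habs1]
    set g := gam l₁ (k - θ₁)
    have h2a : 2 * (a : ℂ) = Complex.exp (Complex.I * g) + Complex.exp (-Complex.I * g) := by
      rw [← hcos, ← hexp]
    rw [h2a]
    have : Complex.exp (Complex.I * g) * Complex.exp (-Complex.I * g) = 1 := by
      rw [← Complex.exp_add]; ring_nf; exact Complex.exp_zero
    linear_combination -this
  · rw [hchar]
    have hcos : Real.cos (gam l₁ (k - θ₁)) = a := by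
      rw [gam, Real.cos_arccos]
      · nlinarith [Real.neg_one_le_cos (k - θ₁), norm_nonneg l₁, habs1]
      · nlinarith [Real.cos_le_one (k - θ₁), norm_nonneg l₁, habs1]
    set g := gam l₁ (k - θ₁)
    have h2a : 2 * (a : ℂ) = Complex.exp (Complex.I * g) + Complex.exp (-Complex.I * g) := by
      rw [← hcos, ← hexp]
    rw [h2a]
    have : Complex.exp (Complex.I * g) * Complex.exp (-Complex.I * g) = 1 := by
      rw [← Complex.exp_add]; ring_nf; exact Complex.exp_zero
    linear_combination -this
end
end

section
/- Let U = !![l₁,l₂;r₁,r₂] be a 2×2 complex unitary matrix with det U = 1 and l₂ ≠ 0, and let θ₁ ∈ ℝ satisfy l₁ = |l₁|e^{iθ₁}. For κ ∈ ℝ define the vectors e₊(κ) = (e^{−iκ}, −(e^{iθ₁}/l₂)(|l₁|e^{−iκ} − e^{iγ(κ)})) and e₋(κ) = (e^{−iκ}, −(e^{iθ₁}/l₂)(|l₁|e^{−iκ} − e^{−iγ(κ)})) in ℂ². Then for every k ∈ ℝ, U(k)·e₊(k−θ₁) = e^{iγ(k−θ₁)}·e₊(k−θ₁) and U(k)·e₋(k−θ₁)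 = e^{−iγ(k−θ₁)}·e₋(k−θ₁), where U(k) := !![e^{−ik}l₁, e^{−ik}l₂; e^{ik}r₁, e^{ik}r₂]. Moreover, if 0 < sin γ(k−θ₁) then e₊(k−θ₁) and e₋(k−θ₁) are linearly independent, so that U(k) = S(k−θ₁)·diag(e^{iγ(k−θ₁)}, e^{−iγ(k−θ₁)})·S(k−θ₁)⁻¹, where S(κ) is the 2×2 matrix with columns e₊(κ) and e₋(κ). -/
open Matrix Complex

noncomputable section

/-- The eigenvector `e₊(κ)`. -/
def eP (l₁ l₂ : ℂ) (θ₁ : ℝ) (κ : ℝ) : Fin 2 → ℂ :=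
  ![Complex.exp (-Complex.I * κ),
    -(Complex.exp (Complex.I * θ₁) / l₂) *
      ((‖l₁‖ : ℂ) * Complex.exp (-Complex.I * κ) - Complex.exp (Complex.I * gam l₁ κ))]

/-- The eigenvector `e₋(κ)`. -/
def eM (l₁ l₂ : ℂ) (θ₁ : ℝ) (κ : ℝ) : Fin 2 → ℂ :=
  ![Complex.exp (-Complex.I * κ),
    -(Complex.exp (Complex.I * θ₁) / l₂) *
      ((‖l₁‖ : ℂ) * Complex.exp (-Complex.I * κ) - Complex.exp (-Complex.I * gam l₁ κ))]

/-- `S(κ)`: the matrix with columns `e₊(κ)` and `e₋(κ)`. -/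
def Smat (l₁ l₂ : ℂ) (θ₁ : ℝ) (κ : ℝ) : Matrix (Fin 2) (Fin 2) ℂ :=
  Matrix.of fun i j => if j = 0 then eP l₁ l₂ θ₁ κ i else eM l₁ l₂ θ₁ κ i

set_option maxHeartbeats 1000000 in
theorem eigenvectors_and_diagonalization_of_Uk
    (l₁ l₂ r₁ r₂ : ℂ)
    (hU : !![l₁, l₂; r₁, r₂] ∈ Matrix.unitaryGroup (Fin 2) ℂ)
    (hdet : (!![l₁, l₂; r₁, r₂] : Matrix (Fin 2) (Fin 2) ℂ).det = 1)
    (hl₂ : l₂ ≠ 0)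
    (θ₁ : ℝ) (hθ₁ : l₁ = (‖l₁‖ : ℂ) * Complex.exp (Complex.I * θ₁))
    (k : ℝ) :
    (Uk l₁ l₂ r₁ r₂ k).mulVec (eP l₁ l₂ θ₁ (k - θ₁)) =
        Complex.exp (Complex.I * gam l₁ (k - θ₁)) • eP l₁ l₂ θ₁ (k - θ₁)
    ∧ (Uk l₁ l₂ r₁ r₂ k).mulVec (eM l₁ l₂ θ₁ (k - θ₁)) =
        Complex.exp (-Complex.I * gam l₁ (k - θ₁)) • eM l₁ l₂ θ₁ (k - θ₁)
    ∧ (0 < Real.sin (gam l₁ (k - θ₁)) →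
        LinearIndependent ℂ ![eP l₁ l₂ θ₁ (k - θ₁), eM l₁ l₂ θ₁ (k - θ₁)]
        ∧ Uk l₁ l₂ r₁ r₂ k =
          Smat l₁ l₂ θ₁ (k - θ₁) *
            Matrix.diagonal ![Complex.exp (Complex.I * gam l₁ (k - θ₁)),
              Complex.exp (-Complex.I * gam l₁ (k - θ₁))] *
            (Smat l₁ l₂ θ₁ (k - θ₁))⁻¹) := by
  -- facts from unitarity and det = 1
  have h1 : star !![l₁, l₂; r₁, r₂] * !![l₁, l₂; r₁, r₂] = 1 :=
    (Matrix.mem_unitaryGroup_iff'.mp hU)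
  have hinvU : (!![l₁, l₂; r₁, r₂] : Matrix (Fin 2) (Fin 2) ℂ)⁻¹ = star !![l₁, l₂; r₁, r₂] :=
    Matrix.inv_eq_left_inv h1
  have hadj : star (!![l₁, l₂; r₁, r₂] : Matrix (Fin 2) (Fin 2) ℂ)
      = adjugate !![l₁, l₂; r₁, r₂] := by
    rw [← hinvU, Matrix.inv_def, hdet]; simp
  have hr₂ : r₂ = starRingEnd ℂ l₁ := by
    have h00 := congrFun (congrFun hadj 0) 0
    simp [Matrix.adjugate_fin_two, Matrix.star_apply] at h00
    exact h00.symm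
  have hr₁ : r₁ = -starRingEnd ℂ l₂ := by
    have h01 := congrFun (congrFun hadj 0) 1
    simp [Matrix.adjugate_fin_two, Matrix.star_apply] at h01
    have := congrArg (starRingEnd ℂ) h01
    simpa using this
  have hd : l₁ * r₂ - l₂ * r₁ = 1 := by
    rw [← hdet]; simp [Matrix.det_fin_two]
  rw [hr₂, hr₁] at hd
  have hsumC : (Complex.normSq l₁ : ℂ) + (Complex.normSq l₂ : ℂ) = 1 := by
    rw [← Complex.mul_conj, ← Complex.mul_conj]; linear_combination hd
  have hsum : Complex.normSq l₁ + Complex.normSq l₂ = 1 := by exact_mod_cast hsumC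
  have habs1 : (‖l₁‖)^2 = Complex.normSq l₁ := Complex.sq_norm l₁
  have hl2sq : starRingEnd ℂ l₂ * l₂ = 1 - (‖l₁‖:ℂ)^2 := by
    rw [mul_comm, Complex.mul_conj]
    have : ((‖l₁‖ : ℝ):ℂ)^2 = (Complex.normSq l₁ : ℂ) := by
      norm_cast
    rw [this]
    norm_cast
    linarith
  -- |l₁| ≤ 1
  have hL1 : ‖l₁‖ ≤ 1 := by
    nlinarith [Complex.normSq_nonneg l₂, norm_nonneg l₁]
  -- the key trigonometric identity
  have hcos : Real.cos (gam l₁ (k - θ₁)) = ‖l₁‖ * Real.cos (k - θ₁) :=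
    Real.cos_arccos
      (by nlinarith [Real.neg_one_le_cos (k - θ₁), Real.cos_le_one (k - θ₁), norm_nonneg l₁])
      (by nlinarith [Real.neg_one_le_cos (k - θ₁), Real.cos_le_one (k - θ₁), norm_nonneg l₁])
  have expcos : ∀ x : ℝ, Complex.exp (Complex.I * x) + Complex.exp (-(Complex.I * x))
      = 2 * (Real.cos x : ℂ) := by
    intro x
    rw [show (Complex.I * (x:ℂ)) = (x:ℂ) * Complex.I by ring,
      show (-((x:ℂ) * Complex.I)) = ((-x : ℝ):ℂ) * Complex.I by push_cast; ring,
      Complex.exp_mul_I, Complex.exp_mul_I, ← Complex.ofReal_cos, ← Complex.ofReal_cos,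
      ← Complex.ofReal_sin, ← Complex.ofReal_sin, Real.cos_neg, Real.sin_neg]
    push_cast; ring
  have gkey : Complex.exp (Complex.I * gam l₁ (k-θ₁)) + Complex.exp (-(Complex.I * gam l₁ (k-θ₁))) =
      (‖l₁‖:ℂ) * (Complex.exp (Complex.I * ((k-θ₁:ℝ):ℂ)) + Complex.exp (-(Complex.I * ((k-θ₁:ℝ):ℂ)))) := by
    rw [expcos, expcos, hcos]; push_cast; ring
  -- abbreviations
  set A := Complex.exp (Complex.I * ((k-θ₁:ℝ):ℂ)) with hA
  set B := Complex.exp (Complex.I * (θ₁:ℂ)) with hB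
  set G := Complex.exp (Complex.I * (gam l₁ (k-θ₁) : ℂ)) with hG
  have hAne : A ≠ 0 := Complex.exp_ne_zero _
  have hBne : B ≠ 0 := Complex.exp_ne_zero _
  have hGne : G ≠ 0 := Complex.exp_ne_zero _
  have hconj : starRingEnd ℂ l₁ = (‖l₁‖ : ℂ) * B⁻¹ := by
    conv_lhs => rw [hθ₁]
    rw [RingHom.map_mul, ← Complex.exp_conj, ← Complex.exp_neg]
    simp [Complex.conj_ofReal, RingHom.map_mul, Complex.conj_I, hB]
  have e1 : Complex.exp (-Complex.I * k) = (A*B)⁻¹ := by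
    rw [hA, hB, ← Complex.exp_add, ← Complex.exp_neg]; congr 1; push_cast; ring
  have e2 : Complex.exp (Complex.I * k) = A*B := by
    rw [hA, hB, ← Complex.exp_add]; congr 1; push_cast; ring
  have e3 : Complex.exp (-Complex.I * ((k-θ₁:ℝ):ℂ)) = A⁻¹ := by
    rw [hA, ← Complex.exp_neg]; congr 1; ring
  have e4 : Complex.exp (-Complex.I * ((gam l₁ (k-θ₁):ℝ):ℂ)) = G⁻¹ := by
    rw [hG, ← Complex.exp_neg]; congr 1; ring
  have gkey' : G + G⁻¹ = (‖l₁‖:ℂ) * (A + A⁻¹) := by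
    rw [hG, hA, ← Complex.exp_neg, ← Complex.exp_neg]; exact gkey
  have gkey2 : A * G^2 + A = (‖l₁‖:ℂ) * A^2 * G + (‖l₁‖:ℂ) * G := by
    have h := gkey'
    field_simp at h
    linear_combination h
  clear_value A B G
  rw [hG]
  -- the two eigenvector equations
  have hP : (Uk l₁ l₂ r₁ r₂ k).mulVec (eP l₁ l₂ θ₁ (k - θ₁)) =
      Complex.exp (Complex.I * gam l₁ (k - θ₁)) • eP l₁ l₂ θ₁ (k - θ₁) := by
    funext i
    fin_cases i <;>
      simp only [Uk, eP, Matrix.mulVec, dotProduct, Fin.sum_univ_two, Pi.smul_apply,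
        smul_eq_mul, Matrix.cons_val', Matrix.cons_val_zero, Matrix.cons_val_one, Matrix.head_cons,
        Matrix.head_fin_const, Matrix.empty_val', Matrix.cons_val_fin_one, Matrix.of_apply,
        e1, e2, e3, e4, hr₁, hr₂, hconj, ← hB, ← hG, Fin.zero_eta, Fin.mk_one] <;>
    field_simp
    · linear_combination hθ₁
    · linear_combination (-A) * hl2sq - gkey2
  have hM : (Uk l₁ l₂ r₁ r₂ k).mulVec (eM l₁ l₂ θ₁ (k - θ₁)) =
      Complex.exp (-Complex.I * gam l₁ (k - θ₁)) • eM l₁ l₂ θ₁ (k - θ₁) := by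
    funext i
    fin_cases i <;>
      simp only [Uk, eM, Matrix.mulVec, dotProduct, Fin.sum_univ_two, Pi.smul_apply,
        smul_eq_mul, Matrix.cons_val', Matrix.cons_val_zero, Matrix.cons_val_one, Matrix.head_cons,
        Matrix.head_fin_const, Matrix.empty_val', Matrix.cons_val_fin_one, Matrix.of_apply,
        e1, e2, e3, e4, hr₁, hr₂, hconj, ← hB, ← hG, Fin.zero_eta, Fin.mk_one] <;>
    field_simp
    · linear_combination G * hθ₁
    · linear_combination (-(A*G^2)) * hl2sq - gkey2
  refine ⟨hP, hM, fun hsin => ?_⟩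
  -- G ≠ G⁻¹
  have hdiffG : G - G⁻¹ = 2 * (Real.sin (gam l₁ (k-θ₁)) : ℂ) * Complex.I := by
    rw [hG, ← Complex.exp_neg,
      show (Complex.I * ((gam l₁ (k-θ₁) : ℝ):ℂ)) = ((gam l₁ (k-θ₁):ℝ):ℂ) * Complex.I by ring,
      show (-(((gam l₁ (k-θ₁):ℝ):ℂ) * Complex.I)) = ((-(gam l₁ (k-θ₁)) : ℝ):ℂ) * Complex.I by push_cast; ring,
      Complex.exp_mul_I, Complex.exp_mul_I, ← Complex.ofReal_cos, ← Complex.ofReal_cos,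
      ← Complex.ofReal_sin, ← Complex.ofReal_sin, Real.cos_neg, Real.sin_neg]
    push_cast; ring
  have hne : G ≠ G⁻¹ := by
    intro h
    have h0 : (0:ℂ) = 2 * (Real.sin (gam l₁ (k-θ₁)) : ℂ) * Complex.I := by
      rw [← hdiffG]; nth_rewrite 1 [h]; rw [sub_self]
    have h1 := h0.symm
    simp only [mul_eq_zero, Complex.I_ne_zero, Complex.ofReal_eq_zero, or_false,
      OfNat.ofNat_ne_zero, false_or] at h1
    linarith
  constructor
  · rw [linearIndependent_fin2]
    constructor
    · intro h
      have h0 := congrFun h 0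
      simpa [eM] using congrFun h 0
    · intro a h
      have h0 := congrFun h 0
      have h1 := congrFun h 1
      simp only [eP, eM, Pi.smul_apply, smul_eq_mul, Matrix.cons_val_zero, Matrix.cons_val_one,
        Matrix.head_cons, e3, e4, ← hB, ← hG] at h0 h1
      have ha : a = 1 := by
        field_simp at h0
        exact h0
      rw [ha, one_mul] at h1
      apply hne
      have h1' := h1
      field_simp at h1'
      have hz : B * l₂ * A^2 * (G^2 - 1) = 0 := by linear_combination (-(B*l₂*A)) * h1'
      have hz2 : G^2 = 1 := by
        have := mul_ne_zero (mul_ne_zero hBne hl₂) (pow_ne_zero 2 hAne)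
        have h3 := (mul_eq_zero.mp hz).resolve_left this
        linear_combination h3
      exact eq_inv_of_mul_eq_one_left (by linear_combination hz2)
  · -- diagonalization
    have hdetS : (Smat l₁ l₂ θ₁ (k-θ₁)).det ≠ 0 := by
      have hdS : (Smat l₁ l₂ θ₁ (k-θ₁)).det =
          (Complex.exp (-Complex.I * ((k-θ₁:ℝ):ℂ)) * Complex.exp (Complex.I * (θ₁:ℂ)) / l₂) *
            (Complex.exp (-Complex.I * ((gam l₁ (k-θ₁):ℝ):ℂ)) -
              Complex.exp (Complex.I * ((gam l₁ (k-θ₁):ℝ):ℂ))) := by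
        simp [Smat, Matrix.det_fin_two, eP, eM]
        field_simp
        ring
      rw [hdS, e3, e4, ← hG]
      refine mul_ne_zero ?_ (sub_ne_zero.mpr (Ne.symm hne))
      field_simp
      exact div_ne_zero (Complex.exp_ne_zero _) (mul_ne_zero hAne hl₂)
    have hUS : Uk l₁ l₂ r₁ r₂ k * Smat l₁ l₂ θ₁ (k - θ₁) =
        Smat l₁ l₂ θ₁ (k - θ₁) *
          Matrix.diagonal ![Complex.exp (Complex.I * gam l₁ (k - θ₁)),
            Complex.exp (-Complex.I * gam l₁ (k - θ₁))] := by
      clear hdiffG hne gkey gkey' gkey2 e1 e2 e3 e4 hconj hθ₁ hA hB hG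
      ext i j
      rw [Matrix.mul_apply, Fin.sum_univ_two, Matrix.mul_apply, Fin.sum_univ_two]
      fin_cases j
      · have h' := congrFun hP i
        simp only [Matrix.mulVec, dotProduct, Fin.sum_univ_two, Pi.smul_apply,
          smul_eq_mul] at h'
        simp only [Smat, Matrix.of_apply, Matrix.diagonal_apply, Fin.isValue]
        norm_num
        rw [h']
        ring
      · have h' := congrFun hM i
        simp only [Matrix.mulVec, dotProduct, Fin.sum_univ_two, Pi.smul_apply,
          smul_eq_mul] at h'
        simp only [Smat, Matrix.of_apply, Matrix.diagonal_apply, Fin.isValue]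
        norm_num
        rw [h']
        ring
    have hS1 : Smat l₁ l₂ θ₁ (k - θ₁) * (Smat l₁ l₂ θ₁ (k - θ₁))⁻¹ = 1 :=
      Matrix.mul_nonsing_inv _ (isUnit_iff_ne_zero.mpr hdetS)
    calc Uk l₁ l₂ r₁ r₂ k = Uk l₁ l₂ r₁ r₂ k * (Smat l₁ l₂ θ₁ (k - θ₁) * (Smat l₁ l₂ θ₁ (k - θ₁))⁻¹) := by
          rw [hS1, mul_one]
      _ = (Uk l₁ l₂ r₁ r₂ k * Smat l₁ l₂ θ₁ (k - θ₁)) * (Smat l₁ l₂ θ₁ (k - θ₁))⁻¹ := by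
          rw [mul_assoc]
      _ = _ := by rw [hUS]
end
end

section
/- Let U = !![l₁,l₂;r₁,r₂] be a 2×2 complex unitary matrix with det U = 1 and l₂ ≠ 0. Then for every k ∈ ℝ the matrix S(k) is unitary, and U(k) = S(k−θ₁) · diag(e^{iγ(k−θ₁)}, e^{−iγ(k−θ₁)}) · S(k−θ₁)*, where U(k) := !![e^{−ik}l₁, e^{−ik}l₂; e^{ik}r₁, e^{ik}r₂] and S(k)* is the conjugate transpose. -/
set_option maxHeartbeats 1000000


open Matrix Complex Filter Topology

noncomputable section

/-- `α₊(k) = i e^{i(k+θ₁−θ₂)}((|l₁|/|l₂|) sin k + √(1+((|l₁|/|l₂|) sin k)²))`. -/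
def alphaP (l₁ l₂ : ℂ) (θ₁ θ₂ : ℝ) (k : ℝ) : ℂ :=
  Complex.I * Complex.exp (Complex.I * (k + θ₁ - θ₂)) *
    (((‖l₁‖ / ‖l₂‖ * Real.sin k
      + Real.sqrt (1 + (‖l₁‖ / ‖l₂‖ * Real.sin k) ^ 2) : ℝ)) : ℂ)

/-- `α₋(k) = i e^{i(k+θ₁−θ₂)}((|l₁|/|l₂|) sin k − √(1+((|l₁|/|l₂|) sin k)²))`. -/
def alphaM (l₁ l₂ : ℂ) (θ₁ θ₂ : ℝ) (k : ℝ) : ℂ :=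
  Complex.I * Complex.exp (Complex.I * (k + θ₁ - θ₂)) *
    (((‖l₁‖ / ‖l₂‖ * Real.sin k
      - Real.sqrt (1 + (‖l₁‖ / ‖l₂‖ * Real.sin k) ^ 2) : ℝ)) : ℂ)

/-- The unitary `S(k)` with columns `(1,α₊(k))/√(1+|α₊(k)|²)` and `(1,α₋(k))/√(1+|α₋(k)|²)`. -/
def SU (l₁ l₂ : ℂ) (θ₁ θ₂ : ℝ) (k : ℝ) : Matrix (Fin 2) (Fin 2) ℂ :=
  !![1 / ((Real.sqrt (1 + ‖alphaP l₁ l₂ θ₁ θ₂ k‖ ^ 2) : ℝ) : ℂ),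
     1 / ((Real.sqrt (1 + ‖alphaM l₁ l₂ θ₁ θ₂ k‖ ^ 2) : ℝ) : ℂ);
     alphaP l₁ l₂ θ₁ θ₂ k / ((Real.sqrt (1 + ‖alphaP l₁ l₂ θ₁ θ₂ k‖ ^ 2) : ℝ) : ℂ),
     alphaM l₁ l₂ θ₁ θ₂ k / ((Real.sqrt (1 + ‖alphaM l₁ l₂ θ₁ θ₂ k‖ ^ 2) : ℝ) : ℂ)]

/-- `H(k) = S(k−θ₁) diag(γ(k−θ₁), −γ(k−θ₁)) S(k−θ₁)*`. -/
def Hk (l₁ l₂ : ℂ) (θ₁ θ₂ : ℝ) (k : ℝ) : Matrix (Fin 2) (Fin 2) ℂ :=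
  SU l₁ l₂ θ₁ θ₂ (k - θ₁) *
    Matrix.diagonal ![((gam l₁ (k - θ₁) : ℝ) : ℂ), -((gam l₁ (k - θ₁) : ℝ) : ℂ)] *
    (SU l₁ l₂ θ₁ θ₂ (k - θ₁))ᴴ

lemma expIx (x : ℝ) : Complex.exp (Complex.I * x) = (Real.cos x : ℂ) + (Real.sin x : ℂ) * Complex.I := by
  rw [mul_comm, Complex.exp_mul_I]; simp [Complex.ofReal_cos, Complex.ofReal_sin]

lemma abs_alpha_aux (w : ℂ) (hw : w.re = 0) (c : ℝ) :
    ‖Complex.I * Complex.exp w * (c:ℂ)‖ ^ 2 = c ^ 2 := by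
  simp [norm_mul, Complex.norm_exp, hw, Complex.norm_real, _root_.sq_abs]

lemma conj_mul_aux (w : ℂ) (hw : w.re = 0) (c d : ℝ) :
    (starRingEnd ℂ) (Complex.I * Complex.exp w * (c:ℂ)) *
      (Complex.I * Complex.exp w * (d:ℂ)) = ((c*d : ℝ) : ℂ) := by
  have h1 : (starRingEnd ℂ) (Complex.I * Complex.exp w) *
      (Complex.I * Complex.exp w) = 1 := by
    rw [mul_comm, Complex.mul_conj']
    simp [norm_mul, Complex.norm_exp, hw]
  calc (starRingEnd ℂ) (Complex.I * Complex.exp w * (c:ℂ)) *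
      (Complex.I * Complex.exp w * (d:ℂ))
      = ((starRingEnd ℂ) (Complex.I * Complex.exp w) *
        (Complex.I * Complex.exp w)) * ((starRingEnd ℂ) (c:ℂ) * (d:ℂ)) := by
        simp only [_root_.map_mul]; ring
    _ = ((c*d:ℝ):ℂ) := by rw [h1, Complex.conj_ofReal]; push_cast; ring

lemma SU_unitary (l₁ l₂ : ℂ) (θ₁ θ₂ k : ℝ) :
    SU l₁ l₂ θ₁ θ₂ k ∈ Matrix.unitaryGroup (Fin 2) ℂ := by
  rw [Matrix.mem_unitaryGroup_iff']
  set s := ‖l₁‖ / ‖l₂‖ * Real.sin k with hs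
  set q := Real.sqrt (1 + s^2) with hqdef
  have hq2 : q^2 = 1 + s^2 := Real.sq_sqrt (by positivity)
  have hq0 : 0 < q := Real.sqrt_pos.2 (by positivity)
  have hAP : alphaP l₁ l₂ θ₁ θ₂ k
      = Complex.I * Complex.exp (Complex.I * ((k:ℂ) + θ₁ - θ₂)) * ((s + q : ℝ):ℂ) := rfl
  have hAM : alphaM l₁ l₂ θ₁ θ₂ k
      = Complex.I * Complex.exp (Complex.I * ((k:ℂ) + θ₁ - θ₂)) * ((s - q : ℝ):ℂ) := rfl
  have hw : (Complex.I * ((k:ℂ) + θ₁ - θ₂)).re = 0 := by simp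
  have habsP : ‖alphaP l₁ l₂ θ₁ θ₂ k‖ ^ 2 = (s+q)^2 := by
    rw [hAP, abs_alpha_aux _ hw]
  have habsM : ‖alphaM l₁ l₂ θ₁ θ₂ k‖ ^ 2 = (s-q)^2 := by
    rw [hAM, abs_alpha_aux _ hw]
  have hnP : Real.sqrt (1 + ‖alphaP l₁ l₂ θ₁ θ₂ k‖ ^ 2) ^ 2 = 1 + (s+q)^2 := by
    rw [habsP]; exact Real.sq_sqrt (by positivity)
  have hnM : Real.sqrt (1 + ‖alphaM l₁ l₂ θ₁ θ₂ k‖ ^ 2) ^ 2 = 1 + (s-q)^2 := by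
    rw [habsM]; exact Real.sq_sqrt (by positivity)
  have hnP0 : Real.sqrt (1 + ‖alphaP l₁ l₂ θ₁ θ₂ k‖ ^ 2) ≠ 0 := by
    rw [habsP]; positivity
  have hnM0 : Real.sqrt (1 + ‖alphaM l₁ l₂ θ₁ θ₂ k‖ ^ 2) ≠ 0 := by
    rw [habsM]; positivity
  have h0P : ((Real.sqrt (1+(s+q)^2) : ℝ):ℂ) ≠ 0 := by
    rw [Complex.ofReal_ne_zero]; positivity
  have h0M : ((Real.sqrt (1+(s-q)^2) : ℝ):ℂ) ≠ 0 := by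
    rw [Complex.ofReal_ne_zero]; positivity
  have hsqP : Real.sqrt (1+(s+q)^2) ^ 2 = 1+(s+q)^2 := Real.sq_sqrt (by positivity)
  have hsqM : Real.sqrt (1+(s-q)^2) ^ 2 = 1+(s-q)^2 := Real.sq_sqrt (by positivity)
  ext i j
  fin_cases i <;> fin_cases j <;>
    simp [SU, Matrix.mul_apply, Fin.sum_univ_two, Matrix.one_apply, Matrix.star_apply,
      Matrix.conjTranspose_apply]
  · rw [habsP, hAP, div_mul_div_comm, conj_mul_aux _ hw]
    field_simp
    norm_cast
    nlinarith [hsqP]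
  · rw [habsP, habsM, hAP, hAM, div_mul_div_comm, conj_mul_aux _ hw]
    field_simp
    norm_cast
    nlinarith [hq2]
  · rw [habsP, habsM, hAP, hAM, div_mul_div_comm, conj_mul_aux _ hw]
    field_simp
    norm_cast
    nlinarith [hq2]
  · rw [habsM, hAM, div_mul_div_comm, conj_mul_aux _ hw]
    field_simp
    norm_cast
    nlinarith [hsqM]



theorem Smat_unitary_and_unitary_diagonalization
    (l₁ l₂ r₁ r₂ : ℂ)
    (hU : !![l₁, l₂; r₁, r₂] ∈ Matrix.unitaryGroup (Fin 2) ℂ)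
    (hdet : (!![l₁, l₂; r₁, r₂] : Matrix (Fin 2) (Fin 2) ℂ).det = 1)
    (hl₂ : l₂ ≠ 0)
    (θ₁ θ₂ : ℝ) (hθ₁ : l₁ = (‖l₁‖ : ℂ) * Complex.exp (Complex.I * θ₁))
    (hθ₂ : l₂ = (‖l₂‖ : ℂ) * Complex.exp (Complex.I * θ₂))
    (k : ℝ) :
    SU l₁ l₂ θ₁ θ₂ k ∈ Matrix.unitaryGroup (Fin 2) ℂ
    ∧ Uk l₁ l₂ r₁ r₂ k =
        SU l₁ l₂ θ₁ θ₂ (k - θ₁) *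
          Matrix.diagonal ![Complex.exp (Complex.I * gam l₁ (k - θ₁)),
            Complex.exp (-Complex.I * gam l₁ (k - θ₁))] *
          (SU l₁ l₂ θ₁ θ₂ (k - θ₁))ᴴ := by
  refine ⟨SU_unitary l₁ l₂ θ₁ θ₂ k, ?_⟩
  -- matrix entry consequences of unitarity
  have hU1 : !![l₁, l₂; r₁, r₂] * star !![l₁, l₂; r₁, r₂] = 1 :=
    Matrix.mem_unitaryGroup_iff.mp hU
  have e00 : l₁ * (starRingEnd ℂ) l₁ + l₂ * (starRingEnd ℂ) l₂ = 1 := by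
    have := congrFun (congrFun hU1 0) 0
    simpa [Matrix.mul_apply, Fin.sum_univ_two, Matrix.star_apply,
      Matrix.conjTranspose_apply, Matrix.one_apply] using this
  have e01 : l₁ * (starRingEnd ℂ) r₁ + l₂ * (starRingEnd ℂ) r₂ = 0 := by
    have := congrFun (congrFun hU1 0) 1
    simpa [Matrix.mul_apply, Fin.sum_univ_two, Matrix.star_apply,
      Matrix.conjTranspose_apply, Matrix.one_apply] using this
  have e01' : (starRingEnd ℂ) l₁ * r₁ + (starRingEnd ℂ) l₂ * r₂ = 0 := by
    have := congrArg (starRingEnd ℂ) e01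
    simpa [_root_.map_mul] using this
  have hdet' : l₁ * r₂ - l₂ * r₁ = 1 := by
    simpa [Matrix.det_fin_two_of] using hdet
  have hr₂ : r₂ = (starRingEnd ℂ) l₁ := by
    linear_combination (-r₂) * e00 + l₂ * e01' + (starRingEnd ℂ) l₁ * hdet'
  have hr₁ : r₁ = -(starRingEnd ℂ) l₂ := by
    linear_combination (-r₁) * e00 + l₁ * e01' - (starRingEnd ℂ) l₂ * hdet'
  set a := ‖l₁‖ with hadef
  set b := ‖l₂‖ with hbdef
  have hb : 0 < b := norm_pos_iff.mpr hl₂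
  have hab : a ^ 2 + b ^ 2 = 1 := by
    have h1 := e00
    rw [Complex.mul_conj, Complex.mul_conj] at h1
    have h2 : Complex.normSq l₁ + Complex.normSq l₂ = 1 := by exact_mod_cast h1
    rw [hadef, hbdef, Complex.sq_norm, Complex.sq_norm]
    exact h2
  have ha0 : 0 ≤ a := norm_nonneg l₁
  have ha1 : a ≤ 1 := by nlinarith
  set t := k - θ₁ with ht
  set s := a / b * Real.sin t with hs
  set q := Real.sqrt (1 + s ^ 2) with hqdef
  have hq2 : q ^ 2 = 1 + s ^ 2 := Real.sq_sqrt (by positivity)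
  have hq0 : 0 < q := Real.sqrt_pos.2 (by positivity)
  have hbs : b * s = a * Real.sin t := by
    rw [hs]; field_simp
  -- trigonometry of gamma
  have hct := Real.cos_le_one t
  have hct' := Real.neg_one_le_cos t
  have hcos : Real.cos (gam l₁ t) = a * Real.cos t := by
    rw [gam]
    exact Real.cos_arccos (by nlinarith) (by nlinarith)
  have hsin : Real.sin (gam l₁ t) = b * q := by
    rw [gam, ← hadef, Real.sin_arccos]
    rw [show 1 - (a * Real.cos t) ^ 2 = (b * q) ^ 2 by
      have hst := Real.sin_sq_add_cos_sq t
      have : (b*q)^2 = b^2 * (1 + s^2) := by rw [mul_pow, hq2]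
      have hbs2 : (b*s)^2 = (a*Real.sin t)^2 := by rw [hbs]
      nlinarith [hbs2]]
    exact Real.sqrt_sq (by positivity)
  -- cast versions
  have hbsC := congrArg (Complex.ofReal) hbs
  push_cast at hbsC
  have hq2C := congrArg (Complex.ofReal) hq2
  push_cast at hq2C
  -- exponential expansions
  have hγ : Complex.exp (Complex.I * ((gam l₁ t : ℝ) : ℂ))
      = ((a * Real.cos t : ℝ) : ℂ) + ((b * q : ℝ) : ℂ) * Complex.I := by
    rw [expIx, hcos, hsin]
  have hγn : Complex.exp (-Complex.I * ((gam l₁ t : ℝ) : ℂ))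
      = ((a * Real.cos t : ℝ) : ℂ) - ((b * q : ℝ) : ℂ) * Complex.I := by
    rw [show -Complex.I * ((gam l₁ t : ℝ) : ℂ) = Complex.I * ((-(gam l₁ t) : ℝ) : ℂ) by push_cast; ring]
    rw [expIx, Real.cos_neg, Real.sin_neg, hcos, hsin]
    push_cast; ring
  -- the alphas with exponent k - θ₂
  have harg : Complex.I * ((t : ℂ) + θ₁ - θ₂) = Complex.I * ((k : ℂ) - θ₂) := by
    push_cast [ht]; ring
  have hA : alphaP l₁ l₂ θ₁ θ₂ t
      = Complex.I * Complex.exp (Complex.I * ((k : ℂ) - θ₂)) * ((s + q : ℝ) : ℂ) := by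
    rw [show alphaP l₁ l₂ θ₁ θ₂ t
      = Complex.I * Complex.exp (Complex.I * ((t : ℂ) + θ₁ - θ₂)) * ((s + q : ℝ) : ℂ) from rfl, harg]
  have hAm : alphaM l₁ l₂ θ₁ θ₂ t
      = Complex.I * Complex.exp (Complex.I * ((k : ℂ) - θ₂)) * ((s - q : ℝ) : ℂ) := by
    rw [show alphaM l₁ l₂ θ₁ θ₂ t
      = Complex.I * Complex.exp (Complex.I * ((t : ℂ) + θ₁ - θ₂)) * ((s - q : ℝ) : ℂ) from rfl, harg]
  -- product collapses
  have c₁ : Complex.exp (-Complex.I * (k : ℂ)) * l₁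
      = (a : ℂ) * (((Real.cos t : ℝ) : ℂ) - ((Real.sin t : ℝ) : ℂ) * Complex.I) := by
    rw [hθ₁]
    rw [show Complex.exp (-Complex.I * (k:ℂ)) * ((a:ℂ) * Complex.exp (Complex.I * θ₁))
      = (a:ℂ) * Complex.exp (-Complex.I * (k:ℂ) + Complex.I * θ₁) by rw [Complex.exp_add]; ring]
    rw [show (-Complex.I * (k:ℂ) + Complex.I * θ₁) = Complex.I * ((-t : ℝ) : ℂ) by push_cast [ht]; ring]
    rw [expIx, Real.cos_neg, Real.sin_neg]
    push_cast; ring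
  have c₂ : ∀ c : ℝ, Complex.exp (-Complex.I * (k : ℂ)) * l₂ *
      (Complex.I * Complex.exp (Complex.I * ((k : ℂ) - θ₂)) * (c : ℂ))
      = Complex.I * ((b : ℂ) * (c : ℂ)) := by
    intro c
    rw [hθ₂]
    rw [show Complex.exp (-Complex.I * (k:ℂ)) * ((b:ℂ) * Complex.exp (Complex.I * θ₂)) *
        (Complex.I * Complex.exp (Complex.I * ((k : ℂ) - θ₂)) * (c : ℂ))
      = Complex.I * ((b:ℂ) * (c:ℂ)) *
        (Complex.exp (-Complex.I * (k:ℂ)) * Complex.exp (Complex.I * (θ₂:ℂ)) *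
          Complex.exp (Complex.I * ((k : ℂ) - θ₂))) by ring]
    rw [← Complex.exp_add, ← Complex.exp_add,
      show (-Complex.I * (k:ℂ) + Complex.I * (θ₂:ℂ) + Complex.I * ((k : ℂ) - θ₂)) = 0 by ring,
      Complex.exp_zero, mul_one]
  have hr₁' : r₁ = -(b : ℂ) * Complex.exp (-(Complex.I * θ₂)) := by
    rw [hr₁, hθ₂, _root_.map_mul, Complex.conj_ofReal, ← Complex.exp_conj]
    simp
  have hr₂' : r₂ = (a : ℂ) * Complex.exp (-(Complex.I * θ₁)) := by
    rw [hr₂, hθ₁, _root_.map_mul, Complex.conj_ofReal, ← Complex.exp_conj]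
    simp
  have c₃ : Complex.exp (Complex.I * (k : ℂ)) * r₁
      = -(b : ℂ) * Complex.exp (Complex.I * ((k : ℂ) - θ₂)) := by
    rw [hr₁']
    rw [show Complex.exp (Complex.I * (k:ℂ)) * (-(b:ℂ) * Complex.exp (-(Complex.I * θ₂)))
      = -(b:ℂ) * (Complex.exp (Complex.I * (k:ℂ)) * Complex.exp (-(Complex.I * θ₂))) by ring,
      ← Complex.exp_add, show (Complex.I * (k:ℂ) + -(Complex.I * θ₂)) = Complex.I * ((k:ℂ) - θ₂) by ring]
  have c₄ : Complex.exp (Complex.I * (k : ℂ)) * r₂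
      = (a : ℂ) * (((Real.cos t : ℝ) : ℂ) + ((Real.sin t : ℝ) : ℂ) * Complex.I) := by
    rw [hr₂']
    rw [show Complex.exp (Complex.I * (k:ℂ)) * ((a:ℂ) * Complex.exp (-(Complex.I * θ₁)))
      = (a:ℂ) * Complex.exp (Complex.I * (k:ℂ) + -(Complex.I * θ₁)) by rw [Complex.exp_add]; ring]
    rw [show (Complex.I * (k:ℂ) + -(Complex.I * θ₁)) = Complex.I * ((t : ℝ) : ℂ) by push_cast [ht]; ring]
    rw [expIx]
  -- the four scalar eigen-equations
  have E1 : Complex.exp (-Complex.I * (k : ℂ)) * l₁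
      + Complex.exp (-Complex.I * (k : ℂ)) * l₂ * alphaP l₁ l₂ θ₁ θ₂ t
      = Complex.exp (Complex.I * ((gam l₁ t : ℝ) : ℂ)) := by
    rw [hA, c₁, c₂, hγ]
    push_cast
    linear_combination Complex.I * hbsC
  have E2 : Complex.exp (-Complex.I * (k : ℂ)) * l₁
      + Complex.exp (-Complex.I * (k : ℂ)) * l₂ * alphaM l₁ l₂ θ₁ θ₂ t
      = Complex.exp (-Complex.I * ((gam l₁ t : ℝ) : ℂ)) := by
    rw [hAm, c₁, c₂, hγn]
    push_cast
    linear_combination Complex.I * hbsC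
  have E3 : Complex.exp (Complex.I * (k : ℂ)) * r₁
      + Complex.exp (Complex.I * (k : ℂ)) * r₂ * alphaP l₁ l₂ θ₁ θ₂ t
      = Complex.exp (Complex.I * ((gam l₁ t : ℝ) : ℂ)) * alphaP l₁ l₂ θ₁ θ₂ t := by
    rw [hA, c₃, c₄, hγ]
    push_cast
    linear_combination ((((a:ℂ)) * Complex.sin (t:ℂ) - (b:ℂ)*(q:ℝ)) * ((s:ℂ)+(q:ℂ)) *
        Complex.exp (Complex.I * ((k : ℂ) - θ₂))) * Complex.I_sq
      + ((b:ℂ) * Complex.exp (Complex.I * ((k : ℂ) - θ₂))) * hq2C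
      + (((s:ℂ)+(q:ℂ)) * Complex.exp (Complex.I * ((k : ℂ) - θ₂))) * hbsC
  have E4 : Complex.exp (Complex.I * (k : ℂ)) * r₁
      + Complex.exp (Complex.I * (k : ℂ)) * r₂ * alphaM l₁ l₂ θ₁ θ₂ t
      = Complex.exp (-Complex.I * ((gam l₁ t : ℝ) : ℂ)) * alphaM l₁ l₂ θ₁ θ₂ t := by
    rw [hAm, c₃, c₄, hγn]
    push_cast
    linear_combination ((((a:ℂ)) * Complex.sin (t:ℂ) + (b:ℂ)*(q:ℝ)) * ((s:ℂ)-(q:ℂ)) *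
        Complex.exp (Complex.I * ((k : ℂ) - θ₂))) * Complex.I_sq
      + ((b:ℂ) * Complex.exp (Complex.I * ((k : ℂ) - θ₂))) * hq2C
      + (((s:ℂ)-(q:ℂ)) * Complex.exp (Complex.I * ((k : ℂ) - θ₂))) * hbsC
  simp only [neg_mul] at E1 E2 E3 E4
  -- denominators
  have h0P : ((Real.sqrt (1 + ‖alphaP l₁ l₂ θ₁ θ₂ t‖ ^ 2) : ℝ) : ℂ) ≠ 0 := by
    rw [Complex.ofReal_ne_zero]
    positivity
  have h0M : ((Real.sqrt (1 + ‖alphaM l₁ l₂ θ₁ θ₂ t‖ ^ 2) : ℝ) : ℂ) ≠ 0 := by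
    rw [Complex.ofReal_ne_zero]
    positivity
  have key : Uk l₁ l₂ r₁ r₂ k * SU l₁ l₂ θ₁ θ₂ t
      = SU l₁ l₂ θ₁ θ₂ t * Matrix.diagonal ![Complex.exp (Complex.I * ((gam l₁ t : ℝ) : ℂ)),
          Complex.exp (-Complex.I * ((gam l₁ t : ℝ) : ℂ))] := by
    ext i j
    fin_cases i <;> fin_cases j <;>
      simp [Uk, SU, Matrix.mul_apply, Fin.sum_univ_two, Matrix.diagonal]
    · field_simp
      linear_combination E1
    · field_simp
      linear_combination E2
    · field_simp
      linear_combination E3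
    · field_simp
      linear_combination E4
  have hSU : SU l₁ l₂ θ₁ θ₂ t * star (SU l₁ l₂ θ₁ θ₂ t) = 1 :=
    Matrix.mem_unitaryGroup_iff.mp (SU_unitary l₁ l₂ θ₁ θ₂ t)
  calc Uk l₁ l₂ r₁ r₂ k = Uk l₁ l₂ r₁ r₂ k * 1 := (mul_one _).symm
    _ = Uk l₁ l₂ r₁ r₂ k * (SU l₁ l₂ θ₁ θ₂ t * star (SU l₁ l₂ θ₁ θ₂ t)) := by rw [hSU]
    _ = (Uk l₁ l₂ r₁ r₂ k * SU l₁ l₂ θ₁ θ₂ t) * star (SU l₁ l₂ θ₁ θ₂ t) := by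
        rw [mul_assoc]
    _ = SU l₁ l₂ θ₁ θ₂ t * Matrix.diagonal ![Complex.exp (Complex.I * ((gam l₁ t : ℝ) : ℂ)),
          Complex.exp (-Complex.I * ((gam l₁ t : ℝ) : ℂ))] * (SU l₁ l₂ θ₁ θ₂ t)ᴴ := by
        rw [key, Matrix.star_eq_conjTranspose]
end
end

section
/- Let U = !![l₁,l₂;r₁,r₂] be a 2×2 complex unitary matrix with det U = 1 and l₂ ≠ 0, and define H(k) := S(k−θ₁) · diag(γ(k−θ₁), −γ(k−θ₁)) · S(k−θ₁)*. Define real functions h₁(κ) = −sin(κ+θ₁−θ₂)/√(1+((|l₁|/|l₂|) sin κ)²), h₂(κ) = cos(κ+θ₁−θ₂)/√(1+((|l₁|/|l₂|) sin κ)²), h₃(κ) = −((|l₁|/|l₂|) sin κ)/√(1+((|l₁|/|l₂|) sin κ)²). Then for every k ∈ ℝ: H(k) = γ(k−θ₁)·(h₁(k−θ₁)σ₁ + h₂(k−θ₁)σ₂ + h₃(k−θ₁)σ₃), and h₁(κ)² + h₂(κ)² + h₃(κ)² = 1 for all κ. -/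
open Matrix Complex Filter Topology

noncomputable section

/-- `h₁(κ) = −sin(κ+θ₁−θ₂)/√(1+((|l₁|/|l₂|) sin κ)²)`. -/
def h1 (l₁ l₂ : ℂ) (θ₁ θ₂ : ℝ) (κ : ℝ) : ℝ :=
  -Real.sin (κ + θ₁ - θ₂) / Real.sqrt (1 + (‖l₁‖ / ‖l₂‖ * Real.sin κ) ^ 2)

/-- `h₂(κ) = cos(κ+θ₁−θ₂)/√(1+((|l₁|/|l₂|) sin κ)²)`. -/
def h2 (l₁ l₂ : ℂ) (θ₁ θ₂ : ℝ) (κ : ℝ) : ℝ :=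
  Real.cos (κ + θ₁ - θ₂) / Real.sqrt (1 + (‖l₁‖ / ‖l₂‖ * Real.sin κ) ^ 2)

/-- `h₃(κ) = −((|l₁|/|l₂|) sin κ)/√(1+((|l₁|/|l₂|) sin κ)²)`. -/
def h3 (l₁ l₂ : ℂ) (κ : ℝ) : ℝ :=
  -(‖l₁‖ / ‖l₂‖ * Real.sin κ) /
    Real.sqrt (1 + (‖l₁‖ / ‖l₂‖ * Real.sin κ) ^ 2)

set_option maxHeartbeats 1000000 in
theorem Hk_pauli_decomposition
    (l₁ l₂ r₁ r₂ : ℂ)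
    (hU : !![l₁, l₂; r₁, r₂] ∈ Matrix.unitaryGroup (Fin 2) ℂ)
    (hdet : (!![l₁, l₂; r₁, r₂] : Matrix (Fin 2) (Fin 2) ℂ).det = 1)
    (hl₂ : l₂ ≠ 0)
    (θ₁ θ₂ : ℝ) (hθ₁ : l₁ = (‖l₁‖ : ℂ) * Complex.exp (Complex.I * θ₁))
    (hθ₂ : l₂ = (‖l₂‖ : ℂ) * Complex.exp (Complex.I * θ₂)) :
    (∀ k : ℝ, Hk l₁ l₂ θ₁ θ₂ k =
      ((gam l₁ (k - θ₁) : ℝ) : ℂ) •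
        (((h1 l₁ l₂ θ₁ θ₂ (k - θ₁) : ℝ) : ℂ) • (!![0, 1; 1, 0] : Matrix (Fin 2) (Fin 2) ℂ)
          + ((h2 l₁ l₂ θ₁ θ₂ (k - θ₁) : ℝ) : ℂ) • (!![0, -Complex.I; Complex.I, 0] : Matrix (Fin 2) (Fin 2) ℂ)
          + ((h3 l₁ l₂ (k - θ₁) : ℝ) : ℂ) • (!![1, 0; 0, -1] : Matrix (Fin 2) (Fin 2) ℂ)))
    ∧ ∀ κ : ℝ, h1 l₁ l₂ θ₁ θ₂ κ ^ 2 + h2 l₁ l₂ θ₁ θ₂ κ ^ 2 + h3 l₁ l₂ κ ^ 2 = 1 := by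

  have key : ∀ κ : ℝ, ∀ g : ℝ,
      SU l₁ l₂ θ₁ θ₂ κ * Matrix.diagonal ![(g : ℂ), -(g : ℂ)] * (SU l₁ l₂ θ₁ θ₂ κ)ᴴ =
      (g : ℂ) • (((h1 l₁ l₂ θ₁ θ₂ κ : ℝ) : ℂ) • (!![0, 1; 1, 0] : Matrix (Fin 2) (Fin 2) ℂ)
          + ((h2 l₁ l₂ θ₁ θ₂ κ : ℝ) : ℂ) • (!![0, -Complex.I; Complex.I, 0] : Matrix (Fin 2) (Fin 2) ℂ)
          + ((h3 l₁ l₂ κ : ℝ) : ℂ) • (!![1, 0; 0, -1] : Matrix (Fin 2) (Fin 2) ℂ)) := by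
    intro κ g
    set x : ℝ := ‖l₁‖ / ‖l₂‖ * Real.sin κ with hxdef
    set s : ℝ := Real.sqrt (1 + x^2) with hsdef
    set φ : ℝ := κ + θ₁ - θ₂ with hφdef
    have hs : 0 < s := Real.sqrt_pos.mpr (by positivity)
    have hs2 : s^2 = 1 + x^2 := Real.sq_sqrt (by positivity)
    have hxs : |x| < s := by
      rw [hsdef, ← Real.sqrt_sq_eq_abs]
      exact Real.sqrt_lt_sqrt (by positivity) (by linarith)
    have hsp : 0 < s + x := by cases abs_lt.mp hxs; linarith
    have hsm : 0 < s - x := by cases abs_lt.mp hxs; linarith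
    set e : ℂ := Complex.exp (Complex.I * (↑κ + ↑θ₁ - ↑θ₂)) with hedef
    have habse : ‖e‖ = 1 := by
      rw [hedef, Complex.norm_exp]
      norm_num [Complex.mul_re]
    have he : e = (Real.cos φ : ℂ) + (Real.sin φ : ℂ) * Complex.I := by
      rw [hedef, show Complex.I * (↑κ + ↑θ₁ - ↑θ₂) = (↑φ : ℂ) * Complex.I by
        push_cast [hφdef]; ring, Complex.exp_mul_I]
      push_cast
      ring
    have hαP : alphaP l₁ l₂ θ₁ θ₂ κ = Complex.I * e * ((x + s : ℝ) : ℂ) := rfl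
    have hαM : alphaM l₁ l₂ θ₁ θ₂ κ = Complex.I * e * ((x - s : ℝ) : ℂ) := rfl
    set A : ℝ := Real.sqrt (2*s*(s+x)) with hAdef
    set B : ℝ := Real.sqrt (2*s*(s-x)) with hBdef
    have hA : 0 < A := Real.sqrt_pos.mpr (by positivity)
    have hB : 0 < B := Real.sqrt_pos.mpr (by positivity)
    have hA2 : A^2 = 2*s*(s+x) := Real.sq_sqrt (by positivity)
    have hB2 : B^2 = 2*s*(s-x) := Real.sq_sqrt (by positivity)
    have r1 : (1:ℝ)/A^2 - 1/B^2 = -x/s := by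
      rw [hA2, hB2]; rw [div_sub_div _ _ (mul_pos (mul_pos two_pos hs) hsp).ne' (mul_pos (mul_pos two_pos hs) hsm).ne', div_eq_div_iff (mul_pos (mul_pos (mul_pos two_pos hs) hsp) (mul_pos (mul_pos two_pos hs) hsm)).ne' hs.ne']; linear_combination 4*s^2*x*hs2
    have r2 : (x+s)/A^2 - (x-s)/B^2 = 1/s := by
      rw [hA2, hB2]; field_simp; ring
    have r3 : (x+s)^2/A^2 - (x-s)^2/B^2 = x/s := by
      rw [hA2, hB2]; field_simp; ring
    have r1C : (1:ℂ)/(A:ℂ)^2 - 1/(B:ℂ)^2 = -(x:ℂ)/(s:ℂ) := by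
      exact_mod_cast congrArg Complex.ofReal r1
    have r2C := congrArg Complex.ofReal r2
    have r3C := congrArg Complex.ofReal r3
    push_cast at r2C r3C
    have hcc : (starRingEnd ℂ) (Complex.cos ↑φ) = Complex.cos ↑φ := by
      rw [← Complex.ofReal_cos, Complex.conj_ofReal]
    have hss : (starRingEnd ℂ) (Complex.sin ↑φ) = Complex.sin ↑φ := by
      rw [← Complex.ofReal_sin, Complex.conj_ofReal]
    have pyth : Complex.sin (φ:ℂ)^2 + Complex.cos (φ:ℂ)^2 = 1 := Complex.sin_sq_add_cos_sq _
    have habsP : Real.sqrt (1 + ‖alphaP l₁ l₂ θ₁ θ₂ κ‖ ^ 2) = A := by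
      rw [hαP]
      simp only [norm_mul, Complex.norm_I, habse, Complex.norm_real, Real.norm_eq_abs, one_mul]
      rw [_root_.sq_abs, hAdef]
      congr 1
      linear_combination -hs2
    have habsM : Real.sqrt (1 + ‖alphaM l₁ l₂ θ₁ θ₂ κ‖ ^ 2) = B := by
      rw [hαM]
      simp only [norm_mul, Complex.norm_I, habse, Complex.norm_real, Real.norm_eq_abs, one_mul]
      rw [_root_.sq_abs, hBdef]
      congr 1
      linear_combination -hs2
    have hSU : SU l₁ l₂ θ₁ θ₂ κ =
        !![1 / (A:ℂ), 1 / (B:ℂ); Complex.I * e * ((x + s : ℝ) : ℂ) / (A:ℂ),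
           Complex.I * e * ((x - s : ℝ) : ℂ) / (B:ℂ)] := by
      rw [SU, habsP, habsM, hαP, hαM]
    rw [hSU]
    ext i j
    fin_cases i <;> fin_cases j <;>
      simp only [Matrix.mul_apply, Fin.sum_univ_two, Matrix.conjTranspose_apply,
        Matrix.diagonal_apply, Matrix.cons_val', Matrix.cons_val_zero, Matrix.cons_val_one,
        Matrix.head_cons, Matrix.head_fin_const, Matrix.empty_val', Matrix.cons_val_fin_one,
        Matrix.smul_apply, Matrix.add_apply, smul_eq_mul, Matrix.of_apply,
        Fin.mk_zero, Fin.mk_one, Fin.isValue,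
        star_div₀, star_one, star_mul', Complex.star_def, Complex.conj_I, Complex.conj_ofReal,
        h1, h2, h3, ← hxdef, ← hsdef, ← hφdef, he] <;>
      norm_num <;>
      (try simp only [hcc, hss])
    · linear_combination (Complex.ofReal g) * r1C
    · linear_combination (-Complex.I*(Complex.cos (φ:ℂ) - Complex.sin (φ:ℂ)*Complex.I)
        * (Complex.ofReal g)) * r2C
        + ((Complex.ofReal g)*Complex.sin (φ:ℂ)/(Complex.ofReal s))*Complex.I_sq
    · linear_combination (Complex.I*(Complex.cos (φ:ℂ) + Complex.sin (φ:ℂ)*Complex.I)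
        * (Complex.ofReal g)) * r2C
        + ((Complex.ofReal g)*Complex.sin (φ:ℂ)/(Complex.ofReal s))*Complex.I_sq
    · linear_combination (-Complex.I^2*(Complex.cos (φ:ℂ) + Complex.sin (φ:ℂ)*Complex.I)
          *(Complex.cos (φ:ℂ) - Complex.sin (φ:ℂ)*Complex.I)*(Complex.ofReal g)) * r3C
        + (-(Complex.ofReal g * Complex.ofReal x / Complex.ofReal s)
            *(Complex.cos (φ:ℂ)^2 + Complex.sin (φ:ℂ)^2*(1-Complex.I^2)))*Complex.I_sq
        + ((Complex.ofReal g * Complex.ofReal x / Complex.ofReal s))*pyth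
  constructor
  · intro k
    rw [Hk]
    exact key (k - θ₁) (gam l₁ (k - θ₁))
  · intro κ
    rw [h1, h2, h3]
    have hb : ‖l₂‖ ≠ 0 := by simpa using hl₂
    set a : ℝ := ‖l₁‖
    set b : ℝ := ‖l₂‖
    set s : ℝ := Real.sqrt (1 + (a / b * Real.sin κ)^2) with hsdef
    have hs : 0 < s := Real.sqrt_pos.mpr (by positivity)
    have hs2' : s^2 = 1 + (a / b * Real.sin κ)^2 := Real.sq_sqrt (by positivity)
    have h : s^2*b^2 = b^2 + a^2*Real.sin κ^2 := by
      field_simp at hs2'; linarith [hs2']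
    field_simp
    linear_combination b^2 * Real.sin_sq_add_cos_sq (κ + θ₁ - θ₂) + (-1)*h
end
end
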